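/- arXiv:1003.1968 — 5 statements merged into one kernel-verified Lean document; each statement's English description precedes it below -/
import Mathlib

section
/- Let A, B, C be n×n complex matrices such that there exist invertible matrices P and Q with PAQ, PBQ, and PCQ all diagonal. Then A·adj(B)·C = C·adj(B)·A, where adj(B) denotes the adjugate (classical adjoint) matrix of B. -/
open Matrix

private lemma diag_key {n : ℕ} (DA DB DC : Matrix (Fin n) (Fin n) ℂ)
    (hA : DA.IsDiag) (hB : DB.IsDiag) (hC : DC.IsDiag) :
    DA * adjugate DB * DC = DC * adjugate DB * DA := by
  rw [hA.diagonal_diag.symm, hB.diagonal_diag.symm, hC.diagonal_diag.symm,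
    adjugate_diagonal]
  simp only [diagonal_mul_diagonal]
  exact congrArg diagonal (funext fun i => by ring)

private lemma conj_key {n : ℕ} (P Q DA DB DC : Matrix (Fin n) (Fin n) ℂ) :
    (P * DA * Q) * adjugate (P * DB * Q) * (P * DC * Q)
      = (Q.det * P.det) • (P * (DA * adjugate DB * DC) * Q) := by
  rw [adjugate_mul_distrib, adjugate_mul_distrib]
  simp only [mul_assoc]
  rw [← mul_assoc Q (adjugate Q), mul_adjugate, ← mul_assoc (adjugate P) P, adjugate_mul]
  simp only [Matrix.smul_mul, Matrix.mul_smul, one_mul, smul_smul]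
  rw [mul_comm Q.det P.det]

theorem stmt1 {n : ℕ} (A B C : Matrix (Fin n) (Fin n) ℂ)
    (P Q : Matrix (Fin n) (Fin n) ℂ) (hP : IsUnit P) (hQ : IsUnit Q)
    (hA : (P * A * Q).IsDiag) (hB : (P * B * Q).IsDiag) (hC : (P * C * Q).IsDiag) :
    A * adjugate B * C = C * adjugate B * A := by
  have hPd : IsUnit P.det := (isUnit_iff_isUnit_det P).mp hP
  have hQd : IsUnit Q.det := (isUnit_iff_isUnit_det Q).mp hQ
  have hrep : ∀ M : Matrix (Fin n) (Fin n) ℂ, M = P⁻¹ * (P * M * Q) * Q⁻¹ := by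
    intro M
    rw [mul_assoc, mul_assoc, Matrix.mul_nonsing_inv _ hQd, mul_one,
      ← mul_assoc, Matrix.nonsing_inv_mul _ hPd, one_mul]
  rw [hrep A, hrep B, hrep C,
    conj_key P⁻¹ Q⁻¹ (P * A * Q) (P * B * Q) (P * C * Q),
    conj_key P⁻¹ Q⁻¹ (P * C * Q) (P * B * Q) (P * A * Q),
    diag_key _ _ _ hA hB hC]
end

section
/- Let U be a linear subspace of m×m complex matrices and suppose there exists a nonzero vector u ∈ ℂ^m with A u = 0 for every A ∈ U. Then for any X, Y, Z ∈ U one has X·adj(Y)·Z − Z·adj(Y)·X = 0. -/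
open Matrix

theorem stmt4 {m : ℕ} (U : Submodule ℂ (Matrix (Fin m) (Fin m) ℂ))
    (u : Fin m → ℂ) (hu : u ≠ 0) (hU : ∀ A ∈ U, A.mulVec u = 0)
    (X Y Z : Matrix (Fin m) (Fin m) ℂ) (hX : X ∈ U) (hY : Y ∈ U) (hZ : Z ∈ U) :
    X * adjugate Y * Z - Z * adjugate Y * X = 0 := by
  have hdet : Y.det = 0 := by
    rw [← Matrix.exists_mulVec_eq_zero_iff]
    exact ⟨u, hu, hU Y hY⟩
  have hYadj : Y * adjugate Y = 0 := by
    rw [Matrix.mul_adjugate, hdet, zero_smul]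
  -- main claim: W * adjugate Y = 0 for any W ∈ U
  have key : ∀ W ∈ U, W * adjugate Y = 0 := by
    intro W hW
    by_cases hA : adjugate Y = 0
    · rw [hA, mul_zero]
    · -- find a nonzero entry of adjugate Y
      obtain ⟨i, j, hij⟩ : ∃ i j, adjugate Y i j ≠ 0 := by
        by_contra h
        push_neg at h
        exact hA (by ext i j; exact h i j)
      set B := Y.updateRow j (Pi.single i 1) with hB
      have hBdet : B.det ≠ 0 := by
        rw [← Matrix.adjugate_apply]; exact hij
      have hBinj : Function.Injective B.mulVec :=
        Matrix.mulVec_injective_iff_isUnit.mpr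
          (Matrix.isUnit_iff_isUnit_det B |>.mpr (isUnit_iff_ne_zero.mpr hBdet))
      -- B.mulVec w = Pi.single j (w i) whenever Y.mulVec w = 0
      have hBmul : ∀ w : Fin m → ℂ, Y.mulVec w = 0 → B.mulVec w = Pi.single j (w i) := by
        intro w hw
        funext k
        by_cases hk : k = j
        · subst hk
          simp [Matrix.mulVec, hB, single_dotProduct]
        · have : B k = Y k := Matrix.updateRow_ne hk
          simp only [Matrix.mulVec, this]
          have := congrFun hw k
          simp only [Matrix.mulVec, Pi.zero_apply] at this
          rw [this, Pi.single_eq_of_ne hk]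
      -- u i ≠ 0
      have hui : u i ≠ 0 := by
        intro h0
        apply hu
        have : B.mulVec u = B.mulVec 0 := by
          rw [Matrix.mulVec_zero, hBmul u (hU Y hY), h0, Pi.single_zero]
        exact hBinj this
      -- every kernel vector of Y is a multiple of u
      have hker : ∀ w : Fin m → ℂ, Y.mulVec w = 0 → w = (w i / u i) • u := by
        intro w hw
        have h1 : B.mulVec ((u i) • w) = B.mulVec ((w i) • u) := by
          rw [Matrix.mulVec_smul, Matrix.mulVec_smul, hBmul w hw, hBmul u (hU Y hY),
            ← Pi.single_smul, ← Pi.single_smul, smul_eq_mul, smul_eq_mul, mul_comm]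
        have h2 : (u i) • w = (w i) • u := hBinj h1
        funext k
        have := congrFun h2 k
        simp only [Pi.smul_apply, smul_eq_mul] at this ⊢
        field_simp
        linear_combination this
      -- columns of adjugate Y are kernel vectors
      have hcol : ∀ b, Y.mulVec (fun k => adjugate Y k b) = 0 := by
        intro b
        funext a
        have := congrFun (congrFun hYadj a) b
        simpa [Matrix.mul_apply, Matrix.mulVec, dotProduct] using this
      ext a b
      have hWu : W.mulVec u = 0 := hU W hW
      have : (fun k => adjugate Y k b) = ((adjugate Y i b) / u i) • u := hker _ (hcol b)
      calc (W * adjugate Y) a b = W.mulVec (fun k => adjugate Y k b) a := by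
            simp [Matrix.mul_apply, Matrix.mulVec, dotProduct]
        _ = 0 := by rw [this, Matrix.mulVec_smul, hWu]; simp
  have h1 : X * adjugate Y = 0 := key X hX
  have h2 : Z * adjugate Y = 0 := key Z hZ
  rw [h1, h2, zero_mul, zero_mul, sub_zero]
end

section
/- Let m ≥ 2 and let U ⊆ ℂ^{m×m} be the linear span of the matrices E_{ii} = e_i e_iᵀ for i = 1,…,m together with z zᵀ, where z ∈ ℂ^m has all coordinates nonzero and z is not a scalar multiple of any e_i. If L ∈ ℂ^{m×m} satisfies that L·M is symmetric for every M ∈ U, then L = d·I for some scalar d ∈ ℂ. -/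
open Matrix

theorem stmt10 {m : ℕ} (hm : 2 ≤ m) (z : Fin m → ℂ)
    (hz : ∀ i, z i ≠ 0)
    (hz' : ∀ (i : Fin m) (c : ℂ), z ≠ c • (Pi.single i 1 : Fin m → ℂ))
    (L : Matrix (Fin m) (Fin m) ℂ)
    (hL : ∀ M ∈ Submodule.span ℂ
        ({vecMulVec z z} ∪
          Set.range (fun i : Fin m =>
            vecMulVec (Pi.single i 1) (Pi.single i (1 : ℂ)))),
      (L * M)ᵀ = L * M) :
    ∃ d : ℂ, L = d • (1 : Matrix (Fin m) (Fin m) ℂ) := by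
  have h0 : 0 < m := by omega
  -- L is diagonal
  have hoff : ∀ j i : Fin m, j ≠ i → L j i = 0 := by
    intro j i hji
    have h := hL (vecMulVec (Pi.single i 1) (Pi.single i 1))
      (Submodule.subset_span (Or.inr ⟨i, rfl⟩))
    have h2 := congrFun (congrFun h i) j
    simp only [Matrix.transpose_apply, Matrix.mul_apply, vecMulVec_apply,
      Pi.single_apply] at h2
    simp only [mul_ite, mul_one, mul_zero, ite_mul, one_mul, zero_mul,
      Finset.sum_ite_eq', Finset.mem_univ, if_true] at h2
    simpa [hji] using h2
  have hdiag : ∀ j k : Fin m, L j j = L k k := by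
    intro j k
    have h := hL (vecMulVec z z) (Submodule.subset_span (Or.inl rfl))
    have h2 := congrFun (congrFun h j) k
    simp only [Matrix.transpose_apply, Matrix.mul_apply, vecMulVec_apply] at h2
    have e1 : ∀ a b : Fin m, (∑ x, L a x * (z x * z b)) = L a a * z a * z b := by
      intro a b
      rw [Finset.sum_eq_single a]
      · ring
      · intro x _ hx
        rw [hoff a x (Ne.symm hx)]; ring
      · intro hx; exact absurd (Finset.mem_univ a) hx
    rw [e1, e1] at h2
    have h3 : L k k * (z k * z j) = L j j * (z k * z j) := by linear_combination h2
    exact (mul_right_cancel₀ (mul_ne_zero (hz k) (hz j)) h3).symm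
  refine ⟨L ⟨0, h0⟩ ⟨0, h0⟩, ?_⟩
  ext j k
  by_cases hjk : j = k
  · subst hjk
    simp [Matrix.one_apply, hdiag j ⟨0, h0⟩]
  · simp [Matrix.one_apply, hjk, hoff j k hjk]
end

section
/- Let T₁ = I₃, let T₂ be a 3×3 diagonal matrix with three distinct diagonal entries, and let T₃ = S be a symmetric 3×3 matrix with all entries nonzero. If R ∈ ℂ^{3×3} satisfies T_k R − Rᵀ T_kᵀ = 0 for k = 1,2,3, then R = r·I₃ for some scalar r ∈ ℂ. -/
open Matrix

theorem stmt11 (d : Fin 3 → ℂ) (hd : Function.Injective d)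
    (S : Matrix (Fin 3) (Fin 3) ℂ) (hS : Sᵀ = S) (hS0 : ∀ i j, S i j ≠ 0)
    (R : Matrix (Fin 3) (Fin 3) ℂ)
    (h1 : (1 : Matrix (Fin 3) (Fin 3) ℂ) * R - Rᵀ * (1 : Matrix (Fin 3) (Fin 3) ℂ)ᵀ = 0)
    (h2 : diagonal d * R - Rᵀ * (diagonal d)ᵀ = 0)
    (h3 : S * R - Rᵀ * Sᵀ = 0) :
    ∃ r : ℂ, R = r • (1 : Matrix (Fin 3) (Fin 3) ℂ) := by
  rw [sub_eq_zero] at h1 h2 h3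
  simp only [one_mul, transpose_one, mul_one] at h1
  -- R is symmetric
  have hsym : ∀ i j, R j i = R i j := fun i j => by
    exact (congrFun (congrFun h1 j) i)
  -- R is diagonal
  have hdiag : ∀ i j, i ≠ j → R i j = 0 := by
    intro i j hij
    have := congrFun (congrFun h2 i) j
    rw [diagonal_transpose] at this
    simp only [diagonal_mul, mul_diagonal, transpose_apply] at this
    rw [hsym i j] at this
    have : (d i - d j) * R i j = 0 := by ring_nf; linear_combination this
    rcases mul_eq_zero.mp this with h | h
    · exact absurd (hd (sub_eq_zero.mp h)) hij
    · exact h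
  -- diagonal entries are all equal
  have heqd : ∀ i j : Fin 3, R i i = R j j := by
    intro i j
    rcases eq_or_ne i j with rfl | hij
    · rfl
    · have := congrFun (congrFun h3 i) j
      rw [hS] at this
      simp only [mul_apply, transpose_apply] at this
      have hl : ∑ k, S i k * R k j = S i j * R j j := by
        rw [Finset.sum_eq_single j]
        · intro k _ hk; rw [hdiag k j hk, mul_zero]
        · intro h; exact absurd (Finset.mem_univ j) h
      have hr : ∑ k, R k i * S k j = R i i * S i j := by
        rw [Finset.sum_eq_single i]
        · intro k _ hk; rw [hdiag k i hk, zero_mul]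
        · intro h; exact absurd (Finset.mem_univ i) h
      rw [hl, hr] at this
      have := mul_left_cancel₀ (hS0 i j) (by linear_combination this : S i j * R j j = S i j * R i i)
      exact this.symm
  refine ⟨R 0 0, ?_⟩
  ext i j
  rcases eq_or_ne i j with rfl | hij
  · simp [heqd 0 i]
  · simp [hdiag i j hij, Matrix.one_apply_ne hij]
end

section
/- There exist 3×3 matrices T₁, T₂, T₃ over ℂ such that the only matrix R ∈ ℂ^{3×3} satisfying T_k R − Rᵀ T_kᵀ = 0 for k = 1,2,3 is R = 0. Concretely, one may take T₁ = I, T₂ = diag(1,2,3), and T₃ = [s_{ij}] with all s_{ij} ≠ 0, s₁₂ = s₂₁, s₁₃ = s₃₁, s₂₃ ≠ s₃₂. -/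
open Matrix

theorem stmt12 :
    ∃ T₁ T₂ T₃ : Matrix (Fin 3) (Fin 3) ℂ,
      T₁ = 1 ∧ T₂ = diagonal ![1, 2, 3] ∧
      (∀ i j, T₃ i j ≠ 0) ∧ T₃ 0 1 = T₃ 1 0 ∧ T₃ 0 2 = T₃ 2 0 ∧ T₃ 1 2 ≠ T₃ 2 1 ∧
      ∀ R : Matrix (Fin 3) (Fin 3) ℂ,
        T₁ * R - Rᵀ * T₁ᵀ = 0 → T₂ * R - Rᵀ * T₂ᵀ = 0 → T₃ * R - Rᵀ * T₃ᵀ = 0 →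
        R = 0 := by
  refine ⟨1, diagonal ![1, 2, 3], !![4,2,3;2,4,5;3,6,4], rfl, rfl, ?_,
    by norm_num [Matrix.vecHead, Matrix.vecTail],
    by norm_num [Matrix.vecHead, Matrix.vecTail, Matrix.cons_val_two],
    by norm_num [Matrix.vecHead, Matrix.vecTail, Matrix.cons_val_two], ?_⟩
  · intro i j; fin_cases i <;> fin_cases j <;> norm_num
  · intro R h1 h2 h3
    have e1 := fun i j => congrFun (congrFun h1 i) j
    have e2 := fun i j => congrFun (congrFun h2 i) j
    have e3 := fun i j => congrFun (congrFun h3 i) j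
    simp only [Matrix.sub_apply, Matrix.mul_apply, Matrix.transpose_apply,
      Matrix.one_apply, Matrix.diagonal_apply, Fin.sum_univ_three,
      Matrix.zero_apply, Matrix.of_apply, Matrix.cons_val', Matrix.cons_val_zero,
      Matrix.cons_val_one, Matrix.head_cons, Matrix.empty_val',
      Matrix.cons_val_fin_one, Matrix.head_fin_const, Matrix.vecHead,
      Matrix.vecTail] at e1 e2 e3
    have a01 := e1 0 1; have a02 := e1 0 2; have a12 := e1 1 2
    have b01 := e2 0 1; have b02 := e2 0 2; have b12 := e2 1 2
    have c01 := e3 0 1; have c02 := e3 0 2; have c12 := e3 1 2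
    norm_num [Fin.ext_iff, Matrix.cons_val_two, Matrix.vecHead, Matrix.vecTail] at a01 a02 a12 b01 b02 b12 c01 c02 c12
    have h10 : R 1 0 = 0 := by linear_combination a01 - b01
    have h01 : R 0 1 = 0 := by linear_combination 2*a01 - b01
    have h20 : R 2 0 = 0 := by linear_combination (1/2)*a02 - (1/2)*b02
    have h02 : R 0 2 = 0 := by linear_combination (3/2)*a02 - (1/2)*b02
    have h21 : R 2 1 = 0 := by linear_combination 2*a12 - b12
    have h12 : R 1 2 = 0 := by linear_combination 3*a12 - b12
    have d1 : R 1 1 = R 0 0 := by linear_combination (1/2)*c01 - 2*h01 - (3/2)*h21 + 2*h10 + (5/2)*h20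
    have d2 : R 2 2 = R 0 0 := by linear_combination (1/3)*c02 - (4/3)*h02 - (2/3)*h12 + 2*h10 + (4/3)*h20
    have d3 : 5 * R 2 2 = 6 * R 1 1 := by linear_combination c12 - 2*h02 - 4*h12 + 3*h01 + 4*h21
    have h00 : R 0 0 = 0 := by linear_combination 5*d2 - d3 - 6*d1
    have h11 : R 1 1 = 0 := by linear_combination d1 + h00
    have h22 : R 2 2 = 0 := by linear_combination d2 + h00
    ext i j
    fin_cases i <;> fin_cases j <;> simpa using ‹_›
end
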